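/- Assume η > 0, α(0) = 0, and set α_max := max_{l ∈ 𝔏} α(l) (so α_max ≥ 0). Let λ₁, λ₂, λ₃ > 0 satisfy λ₂ − λ₃·η ≥ λ₁ and λ₁ ≥ λ₃·(η + α_max). Let β, γ ∈ M(coord). If γ' ∈ M(coord) with [γ'] = 1 and ⟦γ'⟧ ≥ 1, and n' ∈ ℕ^d with |n'| < η + |γ'| satisfy (z^{γ'}D^{(n')})_β^γ ≠ 0, then |β|_≺ > |γ|_≺; likewise, if (∂_i)_β^γ ≠ 0 for some i ∈ {1,…,d}, then |β|_≺ > |γ|_≺. -/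
import Mathlib


open scoped Classical

noncomputable section

/-- The set of `d`-tuples of natural numbers, `ℕ^d`. -/
abbrev Nd (d : ℕ) : Type := Fin d → ℕ

/-- Multi-indices over `ℕ^d`: finitely supported functions `ℕ^d → ℕ`. -/
abbrev MNd (d : ℕ) : Type := Nd d →₀ ℕ

/-- The coordinate set `coord = (𝔏 × M(ℕ^d)) ⊔ ℕ^d`, where `𝔏 = 𝔏⁻ ∪ {0}` is
modelled as `Option Lm` (with `none` playing the role of the element `0`). -/
abbrev Coord (Lm : Type) (d : ℕ) : Type := (Option Lm × MNd d) ⊕ Nd d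

/-- Multi-indices over `coord`. -/
abbrev MCoord (Lm : Type) (d : ℕ) : Type := Coord Lm d →₀ ℕ

variable {Lm : Type} {d : ℕ}

/-- Length `ℓ(m)` of a multi-index. -/
def mlen {I : Type} (m : I →₀ ℕ) : ℕ := m.sum fun _ v => v

/-- The `i`-th unit vector of `ℕ^d`. -/
def unitNd (i : Fin d) : Nd d := Pi.single i 1

/-- The coefficient `(z^{γ'} D^{(n')})_β^γ`. -/
def coefZD (γ' : MCoord Lm d) (n' : Nd d) (β γ : MCoord Lm d) : ℝ :=
  (γ.sum fun x v =>
    match x with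
    | Sum.inl (l, k) =>
        (v : ℝ) * ((k n' : ℝ) + 1) *
          (if β + Finsupp.single (Sum.inl (l, k)) 1 =
              γ + Finsupp.single (Sum.inl (l, k + Finsupp.single n' 1)) 1 + γ'
           then 1 else 0)
    | Sum.inr _ => 0) +
  ((γ (Sum.inr n') : ℝ) *
    (if β + Finsupp.single (Sum.inr n') 1 = γ + γ' then 1 else 0))

/-- The coefficient `(D^{(n')})_β^γ`. -/
def coefD (n' : Nd d) (β γ : MCoord Lm d) : ℝ := coefZD 0 n' β γ

/-- The coefficient `(∂_i)_β^γ`. -/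
def coefPartial (i : Fin d) (β γ : MCoord Lm d) : ℝ :=
  ∑ᶠ n : Nd d,
    ((n i : ℝ) + 1) * coefZD (Finsupp.single (Sum.inr (n + unitNd i)) 1) n β γ

/-- `[β]`. -/
def brkt (β : MCoord Lm d) : ℤ :=
  β.sum fun x v =>
    match x with
    | Sum.inl (_, k) => (1 - (mlen k : ℤ)) * (v : ℤ)
    | Sum.inr _ => (v : ℤ)

/-- Noise homogeneity `⟦β⟧`. -/
def nh (β : MCoord Lm d) : ℕ :=
  β.sum fun x v =>
    match x with
    | Sum.inl (some _, _) => v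
    | Sum.inl (none, _) => 0
    | Sum.inr _ => 0

/-- Scaled degree `|n|` of `n ∈ ℕ^d`. -/
def snorm (s : Fin d → ℝ) (n : Nd d) : ℝ := ∑ i, s i * (n i : ℝ)

/-- A subcritical pair `(l,k)`. -/
def Subcritical {L : Type} (s : Fin d → ℝ) (η : ℝ) (reg : L → ℝ) (ν : ℝ)
    (l : L) (k : MNd d) : Prop :=
  ν < η + reg l ∧
  ∀ k' : MNd d, 0 < k' → k' ≤ k →
    ν < η + (k'.sum fun n v => (ν - snorm s n) * (v : ℝ)) ∧
    ν < η + reg l + (k'.sum fun n v => (ν - snorm s n) * (v : ℝ))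

/-- A subcritical multi-index. -/
def SubcriticalM (s : Fin d → ℝ) (η : ℝ) (reg : Option Lm → ℝ) (ν : ℝ)
    (β : MCoord Lm d) : Prop :=
  ∀ (l : Option Lm) (k : MNd d), β (Sum.inl (l, k)) ≠ 0 → Subcritical s η reg ν l k

/-- Homogeneity `|β|`. -/
def homg (s : Fin d → ℝ) (η : ℝ) (α : Option Lm → ℝ) (β : MCoord Lm d) : ℝ :=
  β.sum fun x v =>
    match x with
    | Sum.inl (l, k) =>
        (α l + k.sum fun n v' => (η - snorm s n) * (v' : ℝ)) * (v : ℝ)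
    | Sum.inr n => (snorm s n - η) * (v : ℝ)

/-- The set `N_min`. -/
def Nmin (s : Fin d → ℝ) (η : ℝ) (reg : Option Lm → ℝ) (ν : ℝ) :
    Set (MCoord Lm d) :=
  {β | brkt β = 1 ∧ SubcriticalM s η reg ν β ∧
       ∀ n : Nd d, snorm s n < ν → β (Sum.inr n) = 0}

/-- The set `N`. -/
def NSet (s : Fin d → ℝ) (η : ℝ) (reg : Option Lm → ℝ) (ν : ℝ) :
    Set (MCoord Lm d) :=
  {β | β ∈ Nmin s η reg ν ∧ 0 < nh β}

/-- The purely polynomial set `P = {e_n}`. -/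
def PolySet : Set (MCoord Lm d) :=
  {β | ∃ n : Nd d, β = Finsupp.single (Sum.inr n) 1}

/-- `populated = P ∪ N`. -/
def Populated (s : Fin d → ℝ) (η : ℝ) (reg : Option Lm → ℝ) (ν : ℝ) :
    Set (MCoord Lm d) :=
  PolySet ∪ NSet s η reg ν

/-- The subcritical coefficient `(z^{γ'} D^{(n')})^{sc}_β^γ`. -/
def coefZDsc (s : Fin d → ℝ) (η : ℝ) (reg : Option Lm → ℝ) (ν : ℝ)
    (γ' : MCoord Lm d) (n' : Nd d) (β γ : MCoord Lm d) : ℝ :=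
  (γ.sum fun x v =>
    match x with
    | Sum.inl (l, k) =>
        if Subcritical s η reg ν l (k + Finsupp.single n' 1) then
          (v : ℝ) * ((k n' : ℝ) + 1) *
            (if β + Finsupp.single (Sum.inl (l, k)) 1 =
                γ + Finsupp.single (Sum.inl (l, k + Finsupp.single n' 1)) 1 + γ'
             then 1 else 0)
        else 0
    | Sum.inr _ => 0) +
  ((γ (Sum.inr n') : ℝ) *
    (if β + Finsupp.single (Sum.inr n') 1 = γ + γ' then 1 else 0))

/-- The subcritical coefficient `(∂_i)^{sc}_β^γ`. -/
def coefPartialSc (s : Fin d → ℝ) (η : ℝ) (reg : Option Lm → ℝ) (ν : ℝ)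
    (i : Fin d) (β γ : MCoord Lm d) : ℝ :=
  ∑ᶠ n : Nd d,
    ((n i : ℝ) + 1) *
      coefZDsc s η reg ν (Finsupp.single (Sum.inr (n + unitNd i)) 1) n β γ

/-- `⌊β⌋ := Σ_n |n|·β(n)`. -/
def polydeg (s : Fin d → ℝ) (β : MCoord Lm d) : ℝ :=
  β.sum fun x v =>
    match x with
    | Sum.inl _ => 0
    | Sum.inr n => snorm s n * (v : ℝ)

/-- `Σ_n (|n| − ν)·β(n)`. -/
def polyexcess (s : Fin d → ℝ) (ν : ℝ) (β : MCoord Lm d) : ℝ :=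
  β.sum fun x v =>
    match x with
    | Sum.inl _ => 0
    | Sum.inr n => (snorm s n - ν) * (v : ℝ)

/-- `|β|_≺ := λ₁·ℓ(β) + λ₂·⟦β⟧ + λ₃·⌊β⌋`. -/
def ordPrec (s : Fin d → ℝ) (lam1 lam2 lam3 : ℝ) (β : MCoord Lm d) : ℝ :=
  lam1 * (mlen β : ℝ) + lam2 * (nh β : ℝ) + lam3 * polydeg s β

section Stmt17Aux
variable {Lm : Type} {d : ℕ}

/-- Generic weighted sum over a multi-index. -/
def wsumR (c : Coord Lm d → ℝ) (β : MCoord Lm d) : ℝ := β.sum fun x v => c x * (v : ℝ)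

lemma wsumR_add (c : Coord Lm d → ℝ) (β γ : MCoord Lm d) :
    wsumR c (β + γ) = wsumR c β + wsumR c γ :=
  Finsupp.sum_add_index' (fun _ => by simp) (fun _ b₁ b₂ => by push_cast; ring)

lemma wsumR_single (c : Coord Lm d → ℝ) (x : Coord Lm d) :
    wsumR c (Finsupp.single x 1) = c x := by
  rw [wsumR, Finsupp.sum_single_index] <;> simp

lemma wsumR_nonneg {c : Coord Lm d → ℝ} (hc : ∀ x, 0 ≤ c x) (β : MCoord Lm d) :
    0 ≤ wsumR c β :=
  Finset.sum_nonneg fun x _ => mul_nonneg (hc x) (by positivity)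

lemma wsumR_mono {c c' : Coord Lm d → ℝ} (h : ∀ x, c x ≤ c' x) (β : MCoord Lm d) :
    wsumR c β ≤ wsumR c' β :=
  Finset.sum_le_sum fun x _ => mul_le_mul_of_nonneg_right (h x) (by positivity)

def cT : Coord Lm d → ℝ := fun x => match x with | .inl _ => 1 | .inr _ => 0
def cP : Coord Lm d → ℝ := fun x => match x with | .inl _ => 0 | .inr _ => 1
def cK : Coord Lm d → ℝ := fun x => match x with | .inl (_, k) => (mlen k : ℝ) | .inr _ => 0
def cN : Coord Lm d → ℝ := fun x => match x with | .inl (some _, _) => 1 | _ => 0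
def cD (s : Fin d → ℝ) : Coord Lm d → ℝ :=
  fun x => match x with | .inl _ => 0 | .inr n => snorm s n
def cH (s : Fin d → ℝ) (η : ℝ) (α : Option Lm → ℝ) : Coord Lm d → ℝ := fun x =>
  match x with
  | .inl (l, k) => α l + k.sum fun n v' => (η - snorm s n) * (v' : ℝ)
  | .inr n => snorm s n - η

lemma snorm_nonneg {s : Fin d → ℝ} (hs : ∀ i, 1 ≤ s i) (n : Nd d) : 0 ≤ snorm s n :=
  Finset.sum_nonneg fun i _ => mul_nonneg (le_trans zero_le_one (hs i)) (by positivity)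

lemma snorm_add (s : Fin d → ℝ) (a b : Nd d) :
    snorm s (a + b) = snorm s a + snorm s b := by
  unfold snorm
  rw [← Finset.sum_add_distrib]
  exact Finset.sum_congr rfl fun j _ => by simp [Pi.add_apply]; push_cast; ring

lemma snorm_unit (s : Fin d → ℝ) (i : Fin d) : snorm s (unitNd i) = s i := by
  unfold snorm unitNd
  rw [Finset.sum_eq_single i]
  · simp
  · intro j _ hj; simp [Pi.single_apply, hj]
  · simp

lemma mlen_eq (β : MCoord Lm d) : (mlen β : ℝ) = wsumR cT β + wsumR cP β := by
  unfold mlen wsumR Finsupp.sum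
  rw [← Finset.sum_add_distrib, Nat.cast_sum]
  exact Finset.sum_congr rfl fun x _ => by rcases x with ⟨l, k⟩ | n <;> simp [cT, cP]

lemma nh_eq (β : MCoord Lm d) : (nh β : ℝ) = wsumR cN β := by
  unfold nh wsumR Finsupp.sum
  rw [Nat.cast_sum]
  exact Finset.sum_congr rfl fun x _ => by
    rcases x with ⟨_ | l, k⟩ | n <;> simp [cN]

lemma polydeg_eq (s : Fin d → ℝ) (β : MCoord Lm d) : polydeg s β = wsumR (cD s) β := by
  unfold polydeg wsumR Finsupp.sum
  exact Finset.sum_congr rfl fun x _ => by rcases x with ⟨l, k⟩ | n <;> simp [cD]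

lemma homg_eq (s : Fin d → ℝ) (η : ℝ) (α : Option Lm → ℝ) (β : MCoord Lm d) :
    homg s η α β = wsumR (cH s η α) β := by
  unfold homg wsumR Finsupp.sum
  exact Finset.sum_congr rfl fun x _ => by rcases x with ⟨l, k⟩ | n <;> rfl

lemma brkt_eq (β : MCoord Lm d) :
    (brkt β : ℝ) = wsumR cT β - wsumR cK β + wsumR cP β := by
  unfold brkt wsumR Finsupp.sum
  rw [← Finset.sum_sub_distrib, ← Finset.sum_add_distrib, Int.cast_sum]
  exact Finset.sum_congr rfl fun x _ => by
    rcases x with ⟨l, k⟩ | n <;> simp [cT, cK, cP] <;> push_cast <;> ring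

lemma ordPrec_eq (s : Fin d → ℝ) (l1 l2 l3 : ℝ) (β : MCoord Lm d) :
    ordPrec s l1 l2 l3 β
      = wsumR (fun x => l1 * (cT x + cP x) + l2 * cN x + l3 * cD s x) β := by
  rw [ordPrec, mlen_eq, nh_eq, polydeg_eq]
  simp only [wsumR, Finsupp.sum, Finset.mul_sum, ← Finset.sum_add_distrib]
  exact Finset.sum_congr rfl fun x _ => by ring

lemma ordPrec_add (s : Fin d → ℝ) (l1 l2 l3 : ℝ) (β γ : MCoord Lm d) :
    ordPrec s l1 l2 l3 (β + γ) = ordPrec s l1 l2 l3 β + ordPrec s l1 l2 l3 γ := by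
  rw [ordPrec_eq, ordPrec_eq, ordPrec_eq, wsumR_add]

lemma ordPrec_single (s : Fin d → ℝ) (l1 l2 l3 : ℝ) (x : Coord Lm d) :
    ordPrec s l1 l2 l3 (Finsupp.single x 1)
      = l1 * (cT x + cP x) + l2 * cN x + l3 * cD s x := by
  rw [ordPrec_eq, wsumR_single]

lemma wsumR_comb4 (s : Fin d → ℝ) (a b c e : ℝ) (β : MCoord Lm d) :
    wsumR (fun x => a * cT x + b * cK x + c * cD s x + e * cP x) β
      = a * wsumR cT β + b * wsumR cK β + c * wsumR (cD s) β + e * wsumR cP β := by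
  simp only [wsumR, Finsupp.sum, Finset.mul_sum, ← Finset.sum_add_distrib]
  exact Finset.sum_congr rfl fun x _ => by ring

lemma coefZD_cases {Lm : Type} {d : ℕ} {γ' : MCoord Lm d} {n' : Nd d} {β γ : MCoord Lm d}
    (h : coefZD γ' n' β γ ≠ 0) :
    (∃ l k, β + Finsupp.single (Sum.inl (l, k)) 1
        = γ + Finsupp.single (Sum.inl (l, k + Finsupp.single n' 1)) 1 + γ') ∨
    β + Finsupp.single (Sum.inr n') 1 = γ + γ' := by
  by_contra hc
  push_neg at hc
  obtain ⟨hc1, hc2⟩ := hc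
  apply h
  rw [coefZD, if_neg hc2, mul_zero, add_zero]
  apply Finset.sum_eq_zero
  intro x _
  rcases x with ⟨l, k⟩ | n
  · simp [if_neg (hc1 l k)]
  · rfl

end Stmt17Aux

lemma key_ineq {Lm : Type} [Fintype Lm] {d : ℕ}
    (s : Fin d → ℝ) (hs : ∀ i, 1 ≤ s i) (η : ℝ) (hη : 0 < η)
    (α : Option Lm → ℝ) (hα0 : α none = 0)
    (lam1 lam2 lam3 : ℝ) (h1 : 0 < lam1) (h2 : 0 < lam2) (h3 : 0 < lam3)
    (hA : lam1 ≤ lam2 - lam3 * η)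
    (hB : lam3 * (η + Finset.univ.sup' Finset.univ_nonempty α) ≤ lam1)
    (γ' : MCoord Lm d) (hbr : brkt γ' = 1) (hnh : 1 ≤ nh γ') :
    lam1 + lam3 * η + lam3 * homg s η α γ' ≤ ordPrec s lam1 lam2 lam3 γ' := by
  set αm := Finset.univ.sup' Finset.univ_nonempty α with hαm_def
  have hαm : 0 ≤ αm := by
    rw [← hα0]; exact Finset.le_sup' α (Finset.mem_univ none)
  set T := wsumR cT γ' with hT
  set K := wsumR cK γ' with hK
  set P := wsumR cP γ' with hP
  set D := wsumR (cD s) γ' with hD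
  set N := wsumR cN γ' with hN
  have hT0 : 0 ≤ T := wsumR_nonneg (fun x => by rcases x with ⟨l,k⟩|n <;> simp [cT]) γ'
  have hP0 : 0 ≤ P := wsumR_nonneg (fun x => by rcases x with ⟨l,k⟩|n <;> simp [cP]) γ'
  have hD0 : 0 ≤ D := wsumR_nonneg
    (fun x => by rcases x with ⟨l,k⟩|n <;> simp [cD, snorm_nonneg hs]) γ'
  have hN1 : (1:ℝ) ≤ N := by rw [hN, ← nh_eq]; exact_mod_cast hnh
  have hbr' : T - K + P = 1 := by
    have hb := brkt_eq (Lm := Lm) γ'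
    rw [hbr] at hb
    push_cast at hb
    linarith
  have hH : homg s η α γ' ≤ αm * T + η * K + 1 * D + (-η) * P := by
    rw [homg_eq, hT, hK, hD, hP, ← wsumR_comb4 s αm η 1 (-η) γ']
    apply wsumR_mono
    intro x
    rcases x with ⟨l, k⟩ | n
    · have ha : α l ≤ αm := Finset.le_sup' α (Finset.mem_univ l)
      have hk : (k.sum fun n v' => (η - snorm s n) * (v' : ℝ)) ≤ η * (mlen k : ℝ) := by
        have he : η * (mlen k : ℝ) = k.sum fun n v' => η * (v' : ℝ) := by
          unfold mlen Finsupp.sum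
          rw [Nat.cast_sum, Finset.mul_sum]
        rw [he]
        exact Finset.sum_le_sum fun n _ =>
          mul_le_mul_of_nonneg_right (by linarith [snorm_nonneg hs n]) (by positivity)
      simp only [cH, cT, cK, cD, cP]
      linarith
    · simp only [cH, cT, cK, cD, cP]
      linarith
  have hop : ordPrec s lam1 lam2 lam3 γ' = lam1 * (T + P) + lam2 * N + lam3 * D := by
    rw [ordPrec, mlen_eq, nh_eq, polydeg_eq]
  have hK' : K = T + P - 1 := by linarith
  rw [hK'] at hH
  have e1 : lam3 * homg s η α γ' ≤ lam3 * (αm * T + η * (T + P - 1) + 1 * D + (-η) * P) :=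
    mul_le_mul_of_nonneg_left hH h3.le
  have e2 : lam3 * (η + αm) * T ≤ lam1 * T := mul_le_mul_of_nonneg_right hB hT0
  have e3 : lam1 ≤ lam2 * N := by
    have h4 : lam2 ≤ lam2 * N := le_mul_of_one_le_right h2.le hN1
    nlinarith [mul_pos h3 hη]
  rw [hop]
  nlinarith [mul_nonneg h1.le hP0]

theorem stmt17 {Lm : Type} [Fintype Lm] {d : ℕ} (hd : 1 ≤ d)
    (s : Fin d → ℝ) (hs : ∀ i, 1 ≤ s i) (η : ℝ) (hη : 0 < η)
    (α : Option Lm → ℝ) (hα0 : α none = 0)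
    (lam1 lam2 lam3 : ℝ) (h1 : 0 < lam1) (h2 : 0 < lam2) (h3 : 0 < lam3)
    (hA : lam1 ≤ lam2 - lam3 * η)
    (hB : lam3 * (η + Finset.univ.sup' Finset.univ_nonempty α) ≤ lam1)
    (β γ : MCoord Lm d) :
    (∀ (γ' : MCoord Lm d) (n' : Nd d), brkt γ' = 1 → 1 ≤ nh γ' →
      snorm s n' < η + homg s η α γ' → coefZD γ' n' β γ ≠ 0 →
      ordPrec s lam1 lam2 lam3 γ < ordPrec s lam1 lam2 lam3 β) ∧
    (∀ i : Fin d, coefPartial i β γ ≠ 0 →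
      ordPrec s lam1 lam2 lam3 γ < ordPrec s lam1 lam2 lam3 β) := by
  have key : ∀ γ' : MCoord Lm d, brkt γ' = 1 → 1 ≤ nh γ' →
      lam1 + lam3 * η + lam3 * homg s η α γ' ≤ ordPrec s lam1 lam2 lam3 γ' :=
    fun γ' => key_ineq s hs η hη α hα0 lam1 lam2 lam3 h1 h2 h3 hA hB γ'
  constructor
  · intro γ' n' hbr hnh hsn hne
    have hD0 : 0 ≤ polydeg s γ' := by
      rw [polydeg_eq]
      exact wsumR_nonneg (fun x => by rcases x with ⟨l,k⟩|n <;> simp [cD, snorm_nonneg hs]) γ'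
    have hnh' : (1:ℝ) ≤ (nh γ' : ℝ) := by exact_mod_cast hnh
    have hpos : 0 < ordPrec s lam1 lam2 lam3 γ' := by
      rw [ordPrec]
      have := le_mul_of_one_le_right h2.le hnh'
      have := mul_nonneg h1.le (Nat.cast_nonneg (mlen γ') : (0:ℝ) ≤ (mlen γ' : ℝ))
      have := mul_nonneg h3.le hD0
      linarith
    rcases coefZD_cases hne with ⟨l, k, heq⟩ | heq
    · have h' := congrArg (ordPrec s lam1 lam2 lam3) heq
      rw [ordPrec_add, ordPrec_add, ordPrec_add, ordPrec_single, ordPrec_single] at h'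
      have hcN : cN (Sum.inl (l, k) : Coord Lm d)
          = cN (Sum.inl (l, k + Finsupp.single n' 1)) := by
        rcases l with _ | l <;> rfl
      rw [hcN] at h'
      simp only [cT, cP, cD] at h'
      linarith
    · have h' := congrArg (ordPrec s lam1 lam2 lam3) heq
      rw [ordPrec_add, ordPrec_add, ordPrec_single] at h'
      simp only [cT, cP, cD, cN] at h'
      have hk := key γ' hbr hnh
      have hlt : lam3 * snorm s n' < lam3 * (η + homg s η α γ') :=
        mul_lt_mul_of_pos_left hsn h3
      rw [mul_add] at hlt
      linarith
  · intro i hne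
    have hex : ∃ n : Nd d, ((n i : ℝ) + 1) *
        coefZD (Finsupp.single (Sum.inr (n + unitNd i)) 1) n β γ ≠ 0 := by
      by_contra hc
      push_neg at hc
      exact hne (by rw [coefPartial]; exact finsum_eq_zero_of_forall_eq_zero hc)
    obtain ⟨n, hn⟩ := hex
    have hzd := right_ne_zero_of_mul hn
    have hsn1 : 0 ≤ snorm s (n + unitNd i) := snorm_nonneg hs _
    rcases coefZD_cases hzd with ⟨l, k, heq⟩ | heq
    · have h' := congrArg (ordPrec s lam1 lam2 lam3) heq
      rw [ordPrec_add, ordPrec_add, ordPrec_add, ordPrec_single, ordPrec_single,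
        ordPrec_single] at h'
      have hcN : cN (Sum.inl (l, k) : Coord Lm d)
          = cN (Sum.inl (l, k + Finsupp.single n 1)) := by
        rcases l with _ | l <;> rfl
      rw [hcN] at h'
      simp only [cT, cP, cD, cN] at h'
      nlinarith [mul_nonneg h3.le hsn1]
    · have h' := congrArg (ordPrec s lam1 lam2 lam3) heq
      rw [ordPrec_add, ordPrec_add, ordPrec_single, ordPrec_single] at h'
      simp only [cT, cP, cD, cN] at h'
      rw [snorm_add, snorm_unit] at h'
      nlinarith [hs i, snorm_nonneg hs n]


end
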